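/- arXiv:1403.5704 — 2 statements merged into one kernel-verified Lean document; each statement's English description precedes it below -/
import Mathlib

section
/- Let J be a Hermitian involution (J = J* and J² = I) on ℂⁿ and let U be an n×n complex matrix. Then the number of negative eigenvalues of J - U J U* equals the number of negative eigenvalues of J - U* J U. -/
open Matrix ComplexOrder

/-- Number of strictly negative eigenvalues (with multiplicity) of a matrix,
interpreted via its Hermitian spectral decomposition (0 if not Hermitian). -/
noncomputable def negCount {n : ℕ} (A : Matrix (Fin n) (Fin n) ℂ) : ℕ :=
  if h : A.IsHermitian then Fintype.card {i // h.eigenvalues i < 0} else 0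

/-- Number of strictly positive eigenvalues. -/
noncomputable def posCount {n : ℕ} (A : Matrix (Fin n) (Fin n) ℂ) : ℕ :=
  if h : A.IsHermitian then Fintype.card {i // 0 < h.eigenvalues i} else 0

/-- Number of nonpositive eigenvalues. -/
noncomputable def nonposCount {n : ℕ} (A : Matrix (Fin n) (Fin n) ℂ) : ℕ :=
  if h : A.IsHermitian then Fintype.card {i // h.eigenvalues i ≤ 0} else 0

/-- Number of nonnegative eigenvalues. -/
noncomputable def nonnegCount {n : ℕ} (A : Matrix (Fin n) (Fin n) ℂ) : ℕ :=
  if h : A.IsHermitian then Fintype.card {i // 0 ≤ h.eigenvalues i} else 0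

/-- Number of zero eigenvalues. -/
noncomputable def zeroCount {n : ℕ} (A : Matrix (Fin n) (Fin n) ℂ) : ℕ :=
  if h : A.IsHermitian then Fintype.card {i // h.eigenvalues i = 0} else 0

set_option linter.unusedSectionVars false

variable {m : Type*} [Fintype m] [DecidableEq m]

/-- coordinate subspace supported on `p` -/
noncomputable def coordSub (p : m → Prop) [DecidablePred p] : Submodule ℂ (m → ℂ) where
  carrier := {y | ∀ i, ¬ p i → y i = 0}
  add_mem' := fun ha hb i hi => by simp [ha i hi, hb i hi]
  zero_mem' := fun i _ => rfl
  smul_mem' := fun c y hy i hi => by simp [hy i hi]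

noncomputable def coordSubEquiv (p : m → Prop) [DecidablePred p] :
    coordSub p ≃ₗ[ℂ] ({i // p i} → ℂ) where
  toFun y i := y.1 i.1
  map_add' _ _ := rfl
  map_smul' _ _ := rfl
  invFun f := ⟨fun i => if h : p i then f ⟨i, h⟩ else 0, fun i hi => by simp [hi]⟩
  left_inv y := by
    ext i
    by_cases h : p i
    · simp [h]
    · simp [h, y.2 i h]
  right_inv f := by ext i; simp [i.2]

lemma finrank_coordSub (p : m → Prop) [DecidablePred p] :
    Module.finrank ℂ (coordSub p) = Fintype.card {i // p i} := by
  rw [(coordSubEquiv p).finrank_eq, Module.finrank_pi]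
variable {m : Type*} [Fintype m] [DecidableEq m]

noncomputable def quadf (A : Matrix m m ℂ) (x : m → ℂ) : ℂ := star x ⬝ᵥ A *ᵥ x

lemma quadf_spectral {A : Matrix m m ℂ} (hA : A.IsHermitian) (x : m → ℂ) :
    quadf A x = ↑(∑ i, hA.eigenvalues i *
      Complex.normSq ((star (hA.eigenvectorUnitary : Matrix m m ℂ) *ᵥ x) i)) := by
  set V : Matrix m m ℂ := ↑hA.eigenvectorUnitary with hV
  set y := star V *ᵥ x with hy
  have h1 : star y = star x ᵥ* V := by
    simp [hy, star_mulVec, star_eq_conjTranspose]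
  calc quadf A x = star x ⬝ᵥ (V * diagonal (RCLike.ofReal ∘ hA.eigenvalues) * star V) *ᵥ x := by
        rw [quadf]; exact congrArg (fun M => star x ⬝ᵥ M *ᵥ x) hA.spectral_theorem
    _ = star y ⬝ᵥ diagonal (RCLike.ofReal ∘ hA.eigenvalues) *ᵥ y := by
        rw [h1, ← mulVec_mulVec, ← mulVec_mulVec, dotProduct_mulVec (star x) V]
    _ = ∑ i, (starRingEnd ℂ) (y i) * ((RCLike.ofReal ∘ hA.eigenvalues) i * y i) := by
        simp [dotProduct, mulVec_diagonal, Pi.star_apply]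
    _ = _ := by
        push_cast
        congr 1; funext i
        rw [show (starRingEnd ℂ) (y i) * ((RCLike.ofReal ∘ hA.eigenvalues) i * y i)
            = (RCLike.ofReal ∘ hA.eigenvalues) i * ((starRingEnd ℂ) (y i) * y i) by ring,
          ← Complex.normSq_eq_conj_mul_self]
        rfl

noncomputable def negCount' (A : Matrix m m ℂ) : ℕ :=
  if h : A.IsHermitian then Fintype.card {i // h.eigenvalues i < 0} else 0

def NegOn (A : Matrix m m ℂ) (W : Submodule ℂ (m → ℂ)) : Prop :=
  ∀ x ∈ W, x ≠ 0 → quadf A x < 0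

def NonnegOn (A : Matrix m m ℂ) (W : Submodule ℂ (m → ℂ)) : Prop :=
  ∀ x ∈ W, 0 ≤ quadf A x

lemma finrank_add_le (A : Matrix m m ℂ) {W P : Submodule ℂ (m → ℂ)}
    (hW : NegOn A W) (hP : NonnegOn A P) :
    Module.finrank ℂ W + Module.finrank ℂ P ≤ Fintype.card m := by
  have hinf : W ⊓ P = ⊥ := by
    rw [Submodule.eq_bot_iff]
    intro x hx
    by_contra hne
    exact absurd (lt_of_le_of_lt (hP x hx.2) (hW x hx.1 hne)) (lt_irrefl _)
  calc Module.finrank ℂ W + Module.finrank ℂ P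
      = Module.finrank ℂ ↥(W ⊔ P) + Module.finrank ℂ ↥(W ⊓ P) :=
        (Submodule.finrank_sup_add_finrank_inf_eq W P).symm
    _ = Module.finrank ℂ ↥(W ⊔ P) := by rw [hinf]; simp
    _ ≤ Module.finrank ℂ (m → ℂ) := Submodule.finrank_le _
    _ = Fintype.card m := by simp [Module.finrank_pi]
lemma mulVec_injective_of_leftinv {M N : Matrix m m ℂ} (h : N * M = 1) :
    Function.Injective M.mulVec := fun a b hab => by
  have := congrArg (N.mulVec) hab
  simpa [mulVec_mulVec, h] using this

lemma exists_negOn (A : Matrix m m ℂ) (hA : A.IsHermitian) :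
    ∃ W : Submodule ℂ (m → ℂ), NegOn A W ∧
      Module.finrank ℂ W = Fintype.card {i // hA.eigenvalues i < 0} := by
  classical
  set V : Matrix m m ℂ := ↑hA.eigenvectorUnitary with hV
  have hVinj : Function.Injective V.mulVec :=
    mulVec_injective_of_leftinv (Unitary.coe_star_mul_self hA.eigenvectorUnitary)
  refine ⟨(coordSub (fun i => hA.eigenvalues i < 0)).map (mulVecLin V), ?_, ?_⟩
  · rintro x hx hxne
    obtain ⟨y, hy, rfl⟩ := Submodule.mem_map.mp hx
    have hyx : star V *ᵥ (mulVecLin V y) = y := by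
      simp [hV, mulVecLin_apply, mulVec_mulVec, Unitary.coe_star_mul_self hA.eigenvectorUnitary,
        Unitary.star_mul_self_of_mem hA.eigenvectorUnitary.2]
    rw [quadf_spectral hA]
    have hyne : y ≠ 0 := by
      rintro rfl; exact hxne (by simp)
    obtain ⟨i, hi⟩ := Function.ne_iff.mp hyne
    have hneg : ∀ j, hA.eigenvalues j * Complex.normSq ((star V *ᵥ mulVecLin V y) j) ≤ 0 := by
      intro j
      rw [hyx]
      by_cases hj : hA.eigenvalues j < 0
      · exact mul_nonpos_iff.mpr (Or.inr ⟨hj.le, Complex.normSq_nonneg _⟩)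
      · simp [hy j hj]
    have hstrict : hA.eigenvalues i * Complex.normSq ((star V *ᵥ mulVecLin V y) i) < 0 := by
      rw [hyx]
      have hilt : hA.eigenvalues i < 0 := by
        by_contra h; exact hi (hy i h)
      exact mul_neg_of_neg_of_pos hilt (Complex.normSq_pos.mpr hi)
    have : (∑ j, hA.eigenvalues j * Complex.normSq ((star V *ᵥ mulVecLin V y) j)) < 0 := by
      have := Finset.sum_lt_sum (g := fun _ => (0:ℝ))
        (fun j _ => hneg j) ⟨i, Finset.mem_univ i, hstrict⟩
      simpa using this
    exact_mod_cast this
  · rw [← (Submodule.equivMapOfInjective _ (hVinj) _).finrank_eq,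
      finrank_coordSub]

lemma exists_nonnegOn (A : Matrix m m ℂ) (hA : A.IsHermitian) :
    ∃ P : Submodule ℂ (m → ℂ), NonnegOn A P ∧
      Module.finrank ℂ P = Fintype.card {i // ¬ hA.eigenvalues i < 0} := by
  classical
  set V : Matrix m m ℂ := ↑hA.eigenvectorUnitary with hV
  have hVinj : Function.Injective V.mulVec :=
    mulVec_injective_of_leftinv (Unitary.coe_star_mul_self hA.eigenvectorUnitary)
  refine ⟨(coordSub (fun i => ¬ hA.eigenvalues i < 0)).map (mulVecLin V), ?_, ?_⟩
  · rintro x hx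
    obtain ⟨y, hy, rfl⟩ := Submodule.mem_map.mp hx
    have hyx : star V *ᵥ (mulVecLin V y) = y := by
      simp [hV, mulVecLin_apply, mulVec_mulVec, Unitary.coe_star_mul_self hA.eigenvectorUnitary,
        Unitary.star_mul_self_of_mem hA.eigenvectorUnitary.2]
    rw [quadf_spectral hA]
    have hsum : (0:ℝ) ≤ ∑ j, hA.eigenvalues j * Complex.normSq ((star V *ᵥ mulVecLin V y) j) := by
      apply Finset.sum_nonneg
      intro j _
      rw [hyx]
      by_cases hj : hA.eigenvalues j < 0
      · simp [hy j (by simpa using hj)]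
      · exact mul_nonneg (not_lt.mp hj) (Complex.normSq_nonneg _)
    exact_mod_cast hsum
  · rw [← (Submodule.equivMapOfInjective _ (hVinj) _).finrank_eq,
      finrank_coordSub]
lemma negCount'_eq {A : Matrix m m ℂ} (hA : A.IsHermitian) :
    negCount' A = Fintype.card {i // hA.eigenvalues i < 0} := dif_pos hA

lemma negOn_le {A : Matrix m m ℂ} (hA : A.IsHermitian) {W : Submodule ℂ (m → ℂ)}
    (hW : NegOn A W) : Module.finrank ℂ W ≤ negCount' A := by
  obtain ⟨P, hP, hPrank⟩ := exists_nonnegOn A hA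
  have h1 := finrank_add_le A hW hP
  have h2 : Fintype.card {i // ¬ hA.eigenvalues i < 0}
      = Fintype.card m - Fintype.card {i // hA.eigenvalues i < 0} :=
    Fintype.card_subtype_compl _
  have h3 : Fintype.card {i // hA.eigenvalues i < 0} ≤ Fintype.card m :=
    Fintype.card_subtype_le _
  rw [negCount'_eq hA]
  omega

lemma isHermitian_conj {A M : Matrix m m ℂ} (hA : A.IsHermitian) :
    (Mᴴ * A * M).IsHermitian := by
  unfold Matrix.IsHermitian
  rw [conjTranspose_mul, conjTranspose_mul, conjTranspose_conjTranspose, hA.eq, mul_assoc]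

lemma quadf_conj (A M : Matrix m m ℂ) (y : m → ℂ) :
    quadf (Mᴴ * A * M) y = quadf A (M *ᵥ y) := by
  rw [quadf, quadf, ← mulVec_mulVec, ← mulVec_mulVec, dotProduct_mulVec (star y) Mᴴ,
    ← star_mulVec]

lemma negCount'_conj_le (A M N : Matrix m m ℂ) (hA : A.IsHermitian) (hNM : N * M = 1) :
    negCount' (Mᴴ * A * M) ≤ negCount' A := by
  have hA' : (Mᴴ * A * M).IsHermitian := isHermitian_conj hA
  obtain ⟨W, hW, hWrank⟩ := exists_negOn _ hA'
  have hMinj : Function.Injective M.mulVec := mulVec_injective_of_leftinv hNM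
  have hneg : NegOn A (W.map (mulVecLin M)) := by
    rintro x hx hxne
    obtain ⟨y, hy, rfl⟩ := Submodule.mem_map.mp hx
    have hyne : y ≠ 0 := by rintro rfl; exact hxne (by simp)
    have := hW y hy hyne
    rwa [quadf_conj] at this
  have hrank : Module.finrank ℂ (W.map (mulVecLin M)) = Module.finrank ℂ W :=
    ((Submodule.equivMapOfInjective _ hMinj _).finrank_eq).symm
  calc negCount' (Mᴴ * A * M) = Module.finrank ℂ (W.map (mulVecLin M)) := by
        rw [hrank, hWrank, negCount'_eq hA']
    _ ≤ negCount' A := negOn_le hA hneg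

lemma negCount'_conj (A M N : Matrix m m ℂ) (hA : A.IsHermitian)
    (hMN : M * N = 1) (hNM : N * M = 1) :
    negCount' (Mᴴ * A * M) = negCount' A := by
  refine le_antisymm (negCount'_conj_le A M N hA hNM) ?_
  have key := negCount'_conj_le (Mᴴ * A * M) N M (isHermitian_conj hA) hMN
  have : Nᴴ * (Mᴴ * A * M) * N = A := by
    have h1 : Nᴴ * Mᴴ = 1 := by rw [← conjTranspose_mul, hMN, conjTranspose_one]
    calc Nᴴ * (Mᴴ * A * M) * N = (Nᴴ * Mᴴ) * A * (M * N) := by simp only [mul_assoc]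
      _ = A := by rw [h1, hMN, one_mul, mul_one]
  rwa [this] at key
variable {k : Type*} [Fintype k] [DecidableEq k]

def prodSubEquiv {R M N : Type*} [Ring R] [AddCommGroup M] [AddCommGroup N]
    [Module R M] [Module R N] (p : Submodule R M) (q : Submodule R N) :
    (p.prod q) ≃ₗ[R] p × q where
  toFun x := (⟨x.1.1, x.2.1⟩, ⟨x.1.2, x.2.2⟩)
  invFun x := ⟨(x.1.1, x.2.1), ⟨x.1.2, x.2.2⟩⟩
  left_inv _ := rfl
  right_inv _ := rfl
  map_add' _ _ := rfl
  map_smul' _ _ := rfl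

lemma quadf_zero_vec (A : Matrix m m ℂ) : quadf A 0 = 0 := by simp [quadf]

lemma negOn_nonpos {A : Matrix m m ℂ} {W : Submodule ℂ (m → ℂ)} (hW : NegOn A W)
    {x : m → ℂ} (hx : x ∈ W) : quadf A x ≤ 0 := by
  by_cases h : x = 0
  · simp [h, quadf_zero_vec]
  · exact (hW x hx h).le

lemma quadf_fromBlocks (A : Matrix m m ℂ) (B : Matrix k k ℂ) (x : m ⊕ k → ℂ) :
    quadf (fromBlocks A 0 0 B) x = quadf A (x ∘ Sum.inl) + quadf B (x ∘ Sum.inr) := by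
  simp [quadf, fromBlocks_mulVec, dotProduct, Fintype.sum_sum_type]

lemma isHermitian_fromBlocks {A : Matrix m m ℂ} {B : Matrix k k ℂ}
    (hA : A.IsHermitian) (hB : B.IsHermitian) :
    (fromBlocks A 0 0 B).IsHermitian := by
  unfold Matrix.IsHermitian
  rw [fromBlocks_conjTranspose, hA.eq, hB.eq]
  simp

noncomputable def sumEquiv : ((m → ℂ) × (k → ℂ)) ≃ₗ[ℂ] (m ⊕ k → ℂ) :=
  (LinearEquiv.sumArrowLequivProdArrow m k ℂ ℂ).symm

lemma sumEquiv_apply (a : m → ℂ) (b : k → ℂ) :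
    (sumEquiv (m := m) (k := k)) (a, b) = Sum.elim a b := rfl

noncomputable def combSub (WA : Submodule ℂ (m → ℂ)) (WB : Submodule ℂ (k → ℂ)) :
    Submodule ℂ (m ⊕ k → ℂ) :=
  (WA.prod WB).map (sumEquiv : _ ≃ₗ[ℂ] _).toLinearMap

lemma finrank_combSub (WA : Submodule ℂ (m → ℂ)) (WB : Submodule ℂ (k → ℂ)) :
    Module.finrank ℂ (combSub WA WB) = Module.finrank ℂ WA + Module.finrank ℂ WB := by
  rw [combSub, LinearEquiv.finrank_map_eq, (prodSubEquiv WA WB).finrank_eq,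
    Module.finrank_prod]

lemma mem_combSub {WA : Submodule ℂ (m → ℂ)} {WB : Submodule ℂ (k → ℂ)}
    {x : m ⊕ k → ℂ} (hx : x ∈ combSub WA WB) :
    x ∘ Sum.inl ∈ WA ∧ x ∘ Sum.inr ∈ WB := by
  obtain ⟨⟨a, b⟩, hab, rfl⟩ := Submodule.mem_map.mp hx
  exact ⟨hab.1, hab.2⟩

lemma negOn_combSub {A : Matrix m m ℂ} {B : Matrix k k ℂ}
    {WA : Submodule ℂ (m → ℂ)} {WB : Submodule ℂ (k → ℂ)}
    (hWA : NegOn A WA) (hWB : NegOn B WB) :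
    NegOn (fromBlocks A 0 0 B) (combSub WA WB) := by
  rintro x hx hxne
  obtain ⟨hmA, hmB⟩ := mem_combSub hx
  rw [quadf_fromBlocks]
  have hx' : x ∘ Sum.inl ≠ 0 ∨ x ∘ Sum.inr ≠ 0 := by
    by_contra h
    push_neg at h
    apply hxne
    funext i
    cases i with
    | inl i => exact congrFun h.1 i
    | inr i => exact congrFun h.2 i
  rcases hx' with h | h
  · exact add_neg_of_neg_of_nonpos (hWA _ hmA h) (negOn_nonpos hWB hmB)
  · exact add_neg_of_nonpos_of_neg (negOn_nonpos hWA hmA) (hWB _ hmB h)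

lemma nonnegOn_combSub {A : Matrix m m ℂ} {B : Matrix k k ℂ}
    {PA : Submodule ℂ (m → ℂ)} {PB : Submodule ℂ (k → ℂ)}
    (hPA : NonnegOn A PA) (hPB : NonnegOn B PB) :
    NonnegOn (fromBlocks A 0 0 B) (combSub PA PB) := by
  rintro x hx
  obtain ⟨hmA, hmB⟩ := mem_combSub hx
  rw [quadf_fromBlocks]
  exact add_nonneg (hPA _ hmA) (hPB _ hmB)

lemma negCount'_fromBlocks {A : Matrix m m ℂ} {B : Matrix k k ℂ}
    (hA : A.IsHermitian) (hB : B.IsHermitian) :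
    negCount' (fromBlocks A 0 0 B) = negCount' A + negCount' B := by
  have hK : (fromBlocks A 0 0 B).IsHermitian := isHermitian_fromBlocks hA hB
  refine le_antisymm ?_ ?_
  · obtain ⟨W, hW, hWrank⟩ := exists_negOn _ hK
    obtain ⟨PA, hPA, hPArank⟩ := exists_nonnegOn A hA
    obtain ⟨PB, hPB, hPBrank⟩ := exists_nonnegOn B hB
    have h1 := finrank_add_le _ hW (nonnegOn_combSub hPA hPB)
    rw [hWrank, finrank_combSub, hPArank, hPBrank] at h1
    have e1 : Fintype.card {i // ¬ hA.eigenvalues i < 0}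
        = Fintype.card m - Fintype.card {i // hA.eigenvalues i < 0} :=
      Fintype.card_subtype_compl _
    have e2 : Fintype.card {i // ¬ hB.eigenvalues i < 0}
        = Fintype.card k - Fintype.card {i // hB.eigenvalues i < 0} :=
      Fintype.card_subtype_compl _
    have l1 : Fintype.card {i // hA.eigenvalues i < 0} ≤ Fintype.card m :=
      Fintype.card_subtype_le _
    have l2 : Fintype.card {i // hB.eigenvalues i < 0} ≤ Fintype.card k :=
      Fintype.card_subtype_le _
    rw [Fintype.card_sum] at h1
    rw [negCount'_eq hK, negCount'_eq hA, negCount'_eq hB]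
    omega
  · obtain ⟨WA, hWA, hWArank⟩ := exists_negOn A hA
    obtain ⟨WB, hWB, hWBrank⟩ := exists_negOn B hB
    have := negOn_le hK (negOn_combSub hWA hWB)
    rw [finrank_combSub, hWArank, hWBrank] at this
    rwa [negCount'_eq hA, negCount'_eq hB]
theorem negCount_congruence_trick {n : ℕ} (J U : Matrix (Fin n) (Fin n) ℂ)
    (hJ : J.IsHermitian) (hJ2 : J * J = 1) :
    negCount (J - U * J * Uᴴ) = negCount (J - Uᴴ * J * U) := by
  have hA1 : (J - U * J * Uᴴ).IsHermitian := by
    unfold Matrix.IsHermitian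
    simp [conjTranspose_sub, conjTranspose_mul, hJ.eq, Matrix.mul_assoc]
  have hA2 : (J - Uᴴ * J * U).IsHermitian := by
    unfold Matrix.IsHermitian
    simp [conjTranspose_sub, conjTranspose_mul, hJ.eq, Matrix.mul_assoc]
  set K : Matrix (Fin n ⊕ Fin n) (Fin n ⊕ Fin n) ℂ := fromBlocks J U Uᴴ J with hK
  have hKh : K.IsHermitian := by
    unfold Matrix.IsHermitian
    rw [hK, fromBlocks_conjTranspose, hJ.eq, conjTranspose_conjTranspose]
  set N1 : Matrix (Fin n ⊕ Fin n) (Fin n ⊕ Fin n) ℂ := fromBlocks 1 (-(U*J)) 0 1 with hN1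
  set N1i : Matrix (Fin n ⊕ Fin n) (Fin n ⊕ Fin n) ℂ := fromBlocks 1 (U*J) 0 1 with hN1i
  have hN1inv : N1 * N1i = 1 ∧ N1i * N1 = 1 := by
    constructor <;>
    · rw [hN1, hN1i, fromBlocks_multiply]
      simp [← fromBlocks_one]
  have c1 : N1 * K * N1ᴴ = fromBlocks (J - U * J * Uᴴ) 0 0 J := by
    rw [hN1, hK, fromBlocks_conjTranspose, fromBlocks_multiply, fromBlocks_multiply]
    simp only [conjTranspose_mul, conjTranspose_one, conjTranspose_neg, conjTranspose_zero,
      hJ.eq, Matrix.mul_one, Matrix.one_mul, Matrix.mul_zero, Matrix.zero_mul,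
      add_zero, zero_add, neg_mul, Matrix.mul_assoc, hJ2]
    have hJJ : ∀ X : Matrix (Fin n) (Fin n) ℂ, J * (J * X) = X := fun X => by
      rw [← Matrix.mul_assoc, hJ2, Matrix.one_mul]
    simp [hJJ, sub_eq_add_neg]
  set N2 : Matrix (Fin n ⊕ Fin n) (Fin n ⊕ Fin n) ℂ := fromBlocks 1 0 (-(Uᴴ*J)) 1 with hN2
  set N2i : Matrix (Fin n ⊕ Fin n) (Fin n ⊕ Fin n) ℂ := fromBlocks 1 0 (Uᴴ*J) 1 with hN2i
  have hN2inv : N2 * N2i = 1 ∧ N2i * N2 = 1 := by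
    constructor <;>
    · rw [hN2, hN2i, fromBlocks_multiply]
      simp [← fromBlocks_one]
  have hJJ : ∀ X : Matrix (Fin n) (Fin n) ℂ, J * (J * X) = X := fun X => by
    rw [← Matrix.mul_assoc, hJ2, Matrix.one_mul]
  have c2 : N2 * K * N2ᴴ = fromBlocks J 0 0 (J - Uᴴ * J * U) := by
    rw [hN2, hK, fromBlocks_conjTranspose, fromBlocks_multiply, fromBlocks_multiply]
    simp only [conjTranspose_mul, conjTranspose_one, conjTranspose_neg, conjTranspose_zero,
      hJ.eq, Matrix.mul_one, Matrix.one_mul, Matrix.mul_zero, Matrix.zero_mul,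
      add_zero, zero_add, neg_mul, Matrix.mul_assoc, hJ2]
    simp [hJJ, sub_eq_add_neg, Matrix.add_mul]
    abel
  have h1 : negCount' (fromBlocks (J - U * J * Uᴴ) 0 0 J) = negCount' K := by
    rw [← c1, show N1 * K * N1ᴴ = (N1ᴴ)ᴴ * K * N1ᴴ by rw [conjTranspose_conjTranspose]]
    exact negCount'_conj K N1ᴴ N1iᴴ hKh
      (by rw [← conjTranspose_mul, hN1inv.2, conjTranspose_one])
      (by rw [← conjTranspose_mul, hN1inv.1, conjTranspose_one])
  have h2 : negCount' (fromBlocks J 0 0 (J - Uᴴ * J * U)) = negCount' K := by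
    rw [← c2, show N2 * K * N2ᴴ = (N2ᴴ)ᴴ * K * N2ᴴ by rw [conjTranspose_conjTranspose]]
    exact negCount'_conj K N2ᴴ N2iᴴ hKh
      (by rw [← conjTranspose_mul, hN2inv.2, conjTranspose_one])
      (by rw [← conjTranspose_mul, hN2inv.1, conjTranspose_one])
  rw [negCount'_fromBlocks hA1 hJ] at h1
  rw [negCount'_fromBlocks hJ hA2] at h2
  show negCount' _ = negCount' _
  omega
end

section
/- Let H₁ and H₂ be Hermitian n×n complex matrices with H₁ ≤ H₂. If the numbers of negative eigenvalues of H₁ and H₂ coincide, then ker H₂ ⊆ ker H₁. -/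
open Matrix ComplexOrder

section Aux
variable {n : ℕ}

noncomputable def coords {A : Matrix (Fin n) (Fin n) ℂ} (hA : A.IsHermitian)
    (x : Fin n → ℂ) : Fin n → ℂ :=
  star (hA.eigenvectorUnitary : Matrix (Fin n) (Fin n) ℂ) *ᵥ x

lemma quad_eq {A : Matrix (Fin n) (Fin n) ℂ} (hA : A.IsHermitian) (x : Fin n → ℂ) :
    star x ⬝ᵥ (A *ᵥ x)
      = ((∑ i, hA.eigenvalues i * Complex.normSq (coords hA x i) : ℝ) : ℂ) := by
  set U : Matrix (Fin n) (Fin n) ℂ := (hA.eigenvectorUnitary : Matrix (Fin n) (Fin n) ℂ)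
  have hspec := hA.spectral_theorem
  calc star x ⬝ᵥ (A *ᵥ x)
      = star x ⬝ᵥ ((U * (Matrix.diagonal (RCLike.ofReal ∘ hA.eigenvalues)) * star U) *ᵥ x) := by
        conv_lhs => rw [hspec, Unitary.conjStarAlgAut_apply]
    _ = star (coords hA x) ⬝ᵥ ((Matrix.diagonal (RCLike.ofReal ∘ hA.eigenvalues)) *ᵥ coords hA x) := by
        rw [← Matrix.mulVec_mulVec, ← Matrix.mulVec_mulVec, Matrix.dotProduct_mulVec]
        congr 1
        rw [coords, Matrix.star_mulVec]
        simp [Matrix.star_eq_conjTranspose]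
        rfl
    _ = ((∑ i, hA.eigenvalues i * Complex.normSq (coords hA x i) : ℝ) : ℂ) := by
        push_cast
        rw [dotProduct]
        refine Finset.sum_congr rfl fun i _ => ?_
        rw [Matrix.mulVec_diagonal]
        simp only [Pi.star_apply, Function.comp_apply, RCLike.ofReal_alg,
          Complex.normSq_eq_conj_mul_self, Complex.real_smul, mul_one, Complex.star_def]
        ring

lemma coords_comb {ι : Type} [Fintype ι] {A : Matrix (Fin n) (Fin n) ℂ} (hA : A.IsHermitian)
    (c : ι → ℂ) (f : ι → Fin n → ℂ) (t : ℂ) (v : Fin n → ℂ) :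
    coords hA ((∑ i, c i • f i) + t • v)
      = (∑ i, c i • coords hA (f i)) + t • coords hA v := by
  have h : ∀ y, coords hA y
      = (star (hA.eigenvectorUnitary : Matrix (Fin n) (Fin n) ℂ)).mulVecLin y := fun _ => rfl
  simp only [h, map_add, map_sum, _root_.map_smul]

lemma coords_eigen {A : Matrix (Fin n) (Fin n) ℂ} (hA : A.IsHermitian) (j : Fin n) :
    coords hA (⇑(hA.eigenvectorBasis j)) = Pi.single j 1 :=
  hA.star_eigenvectorUnitary_mulVec j

lemma coords_ker {A : Matrix (Fin n) (Fin n) ℂ} (hA : A.IsHermitian) {v : Fin n → ℂ}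
    (hv : A *ᵥ v = 0) (i : Fin n) (hi : hA.eigenvalues i ≠ 0) : coords hA v i = 0 := by
  set U : Matrix (Fin n) (Fin n) ℂ := (hA.eigenvectorUnitary : Matrix (Fin n) (Fin n) ℂ)
  have key : star U * A = Matrix.diagonal (RCLike.ofReal ∘ hA.eigenvalues) * star U := by
    conv_lhs => rw [hA.spectral_theorem, Unitary.conjStarAlgAut_apply]
    rw [← mul_assoc, ← mul_assoc, Unitary.coe_star_mul_self, one_mul]
  have h0 : (Matrix.diagonal (RCLike.ofReal ∘ hA.eigenvalues) *ᵥ coords hA v) i = 0 := by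
    rw [coords, Matrix.mulVec_mulVec, ← key, ← Matrix.mulVec_mulVec, hv]
    simp
  rw [Matrix.mulVec_diagonal] at h0
  rcases mul_eq_zero.mp h0 with h | h
  · exact absurd (by simpa using h) hi
  · exact h

end Aux

theorem ker_subset_of_negCount_eq {n : ℕ} (H₁ H₂ : Matrix (Fin n) (Fin n) ℂ)
    (h1 : H₁.IsHermitian) (h2 : H₂.IsHermitian)
    (hle : (H₂ - H₁).PosSemidef)
    (hcount : negCount H₁ = negCount H₂) :
    ∀ v : Fin n → ℂ, H₂ *ᵥ v = 0 → H₁ *ᵥ v = 0 := by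
  intro v hv
  by_contra hne
  set P : Matrix (Fin n) (Fin n) ℂ := H₂ - H₁ with hP
  have hPv : P *ᵥ v = -(H₁ *ᵥ v) := by rw [hP, Matrix.sub_mulVec, hv, zero_sub]
  have hPvne : P *ᵥ v ≠ 0 := by rw [hPv]; simpa using hne
  have hvne : v ≠ 0 := by rintro rfl; exact hne (by simp)
  have hcard : Fintype.card {i // h1.eigenvalues i < 0}
      = Fintype.card {i // h2.eigenvalues i < 0} := by
    have h := hcount; rwa [negCount, negCount, dif_pos h1, dif_pos h2] at h
  -- the comparison matrix
  set u : Fin n → (Fin n → ℂ) := fun i => ⇑(h2.eigenvectorBasis i) with hu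
  set M : Matrix {j // h1.eigenvalues j < 0} ({i // h2.eigenvalues i < 0} ⊕ Unit) ℂ :=
    fun j i => Sum.elim (fun i => coords h1 (u i.1) j.1) (fun _ => coords h1 v j.1) i with hM
  have hninj : ¬ Function.Injective M.mulVecLin := by
    intro hinj
    have hle' := LinearMap.finrank_le_finrank_of_injective hinj
    rw [Module.finrank_fintype_fun_eq_card, Module.finrank_fintype_fun_eq_card,
      Fintype.card_sum, Fintype.card_unit] at hle'
    omega
  obtain ⟨w, hwmem, hwne⟩ := (Submodule.ne_bot_iff _).mp
    (fun h => hninj (LinearMap.ker_eq_bot.mp h))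
  have hw0 : M *ᵥ w = 0 := hwmem
  set t : ℂ := w (Sum.inr ()) with ht
  set c : {i // h2.eigenvalues i < 0} → ℂ := fun i => w (Sum.inl i) with hc
  set x : Fin n → ℂ := (∑ i, c i • u i.1) + t • v with hx
  -- coordinates of x
  have hx1 : coords h1 x = (∑ i, c i • coords h1 (u i.1)) + t • coords h1 v :=
    coords_comb h1 c (fun i => u i.1) t v
  have hx2 : coords h2 x = (∑ i, c i • coords h2 (u i.1)) + t • coords h2 v :=
    coords_comb h2 c (fun i => u i.1) t v
  -- Fact A : coords of x in H₁ basis vanish at negative indices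
  have hA1 : ∀ j : Fin n, h1.eigenvalues j < 0 → coords h1 x j = 0 := by
    intro j hj
    have h0 : (M *ᵥ w) ⟨j, hj⟩ = 0 := by rw [hw0]; rfl
    rw [Matrix.mulVec, dotProduct, Fintype.sum_sum_type] at h0
    rw [hx1]
    simp only [Pi.add_apply, Finset.sum_apply, Pi.smul_apply, smul_eq_mul]
    rw [← h0]
    simp only [hM, Sum.elim_inl, Sum.elim_inr]
    rw [Finset.sum_congr rfl (fun i _ => mul_comm (coords h1 (u i.1) j) (w (Sum.inl i)))]
    simp [mul_comm]
    rfl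
  -- Fact A' : the H₁-quadratic form of x is nonnegative
  have hq1 : 0 ≤ ∑ i, h1.eigenvalues i * Complex.normSq (coords h1 x i) :=
    Finset.sum_nonneg fun i _ => by
      by_cases hi : h1.eigenvalues i < 0
      · rw [hA1 i hi]; simp
      · exact mul_nonneg (le_of_not_gt hi) (Complex.normSq_nonneg _)
  -- coordinates of x in the H₂ basis
  have hx2' : ∀ i : Fin n, coords h2 x i
      = (if hi : h2.eigenvalues i < 0 then c ⟨i, hi⟩ else 0) + t * coords h2 v i := by
    intro i
    rw [hx2]
    simp only [Pi.add_apply, Finset.sum_apply, Pi.smul_apply, smul_eq_mul]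
    congr 1
    have he : ∀ i' : {i // h2.eigenvalues i < 0},
        coords h2 (u i'.1) i = if i = i'.1 then 1 else 0 := by
      intro i'
      rw [hu]
      rw [coords_eigen h2 i'.1]
      simp [Pi.single_apply]
    rw [Finset.sum_congr rfl (fun i' _ => by rw [he i'])]
    by_cases hi : h2.eigenvalues i < 0
    · rw [dif_pos hi]
      rw [Finset.sum_eq_single (⟨i, hi⟩ : {i // h2.eigenvalues i < 0})]
      · simp
      · intro b _ hb
        rw [if_neg, mul_zero]
        exact fun h => hb (Subtype.ext h.symm)
      · intro h; exact absurd (Finset.mem_univ _) h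
    · rw [dif_neg hi]
      apply Finset.sum_eq_zero
      intro b _
      rw [if_neg, mul_zero]
      rintro rfl
      exact hi b.2
  -- each H₂-term is nonpositive
  have hterm : ∀ i : Fin n, h2.eigenvalues i * Complex.normSq (coords h2 x i) ≤ 0 := by
    intro i
    rcases lt_trichotomy (h2.eigenvalues i) 0 with hi | hi | hi
    · exact mul_nonpos_of_nonpos_of_nonneg hi.le (Complex.normSq_nonneg _)
    · rw [hi, zero_mul]
    · have h0 : coords h2 x i = 0 := by
        rw [hx2', dif_neg (not_lt_of_gt hi), coords_ker h2 hv i (ne_of_gt hi)]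
        ring
      rw [h0]; simp
  have hq2 : ∑ i, h2.eigenvalues i * Complex.normSq (coords h2 x i) ≤ 0 :=
    Finset.sum_nonpos fun i _ => hterm i
  -- split the H₁ form
  have hsplit : star x ⬝ᵥ (H₁ *ᵥ x) = star x ⬝ᵥ (H₂ *ᵥ x) - star x ⬝ᵥ (P *ᵥ x) := by
    rw [hP, Matrix.sub_mulVec, dotProduct_sub]
    ring
  have hPx : 0 ≤ (star x ⬝ᵥ (P *ᵥ x)).re := by
    have := hle.dotProduct_mulVec_nonneg x
    rw [Complex.le_def] at this
    simpa using this.1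
  have hre : (∑ i, h1.eigenvalues i * Complex.normSq (coords h1 x i))
      = (∑ i, h2.eigenvalues i * Complex.normSq (coords h2 x i))
        - (star x ⬝ᵥ (P *ᵥ x)).re := by
    have := congrArg Complex.re hsplit
    rw [quad_eq h1 x, quad_eq h2 x] at this
    simpa using this
  -- final contradiction, by cases on whether some c-coordinate is nonzero
  by_cases hcz : ∀ i : {i // h2.eigenvalues i < 0}, c i = 0
  · -- then x = t • v with t ≠ 0, and the P-term is strictly positive
    have htne : t ≠ 0 := by
      intro h0
      apply hwne
      funext i'
      rcases i' with i | ⟨⟩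
      · exact hcz i
      · exact h0
    have hxv : x = t • v := by
      rw [hx]
      rw [Finset.sum_congr rfl (fun i _ => by rw [hcz i, zero_smul])]
      simp
    have hPvq : star v ⬝ᵥ (P *ᵥ v) ≠ 0 :=
      fun h => hPvne ((hle.dotProduct_mulVec_zero_iff v).mp h)
    have hPvle := hle.dotProduct_mulVec_nonneg v
    rw [Complex.le_def] at hPvle
    have hPvre : 0 < (star v ⬝ᵥ (P *ᵥ v)).re := by
      rcases lt_or_eq_of_le hPvle.1 with h | h
      · simpa using h
      · exfalso; apply hPvq; apply Complex.ext <;> simp [← h, ← hPvle.2]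
    have hPxq : star x ⬝ᵥ (P *ᵥ x) = (starRingEnd ℂ t * t) * (star v ⬝ᵥ (P *ᵥ v)) := by
      rw [hxv]
      rw [Matrix.mulVec_smul, dotProduct_smul, star_smul, smul_dotProduct]
      simp [smul_eq_mul]
      ring
    have hPxre : 0 < (star x ⬝ᵥ (P *ᵥ x)).re := by
      rw [hPxq]
      have : starRingEnd ℂ t * t = (Complex.normSq t : ℂ) := by
        rw [Complex.normSq_eq_conj_mul_self]
      rw [this]
      rw [Complex.re_ofReal_mul]
      exact mul_pos (Complex.normSq_pos.mpr htne) hPvre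
    linarith
  · push_neg at hcz
    obtain ⟨i₀, hi₀⟩ := hcz
    have hstrict : ∑ i, h2.eigenvalues i * Complex.normSq (coords h2 x i) < 0 := by
      have hlt : h2.eigenvalues i₀.1 * Complex.normSq (coords h2 x i₀.1) < 0 := by
        have h0 : coords h2 x i₀.1 = c i₀ := by
          rw [hx2', dif_pos i₀.2, coords_ker h2 hv i₀.1 (ne_of_lt i₀.2)]
          simp
        rw [h0]
        exact mul_neg_of_neg_of_pos i₀.2 (by simpa using hi₀)
      have h1' := Finset.single_le_sum
        (f := fun i => -(h2.eigenvalues i * Complex.normSq (coords h2 x i)))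
        (fun i _ => neg_nonneg.2 (hterm i)) (Finset.mem_univ i₀.1)
      rw [Finset.sum_neg_distrib] at h1'
      linarith
    linarith
end
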